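/- For every positive integer n there exists a finite connected simple graph G such that ℓ(G) − vv(G) ≥ n, i.e., the difference between the maximum number of leaves of a spanning tree of G and the vertex visibility number of G can be arbitrarily large. -/

import Mathlib

open SimpleGraph

variable {V : Type*}
/-- A walk `p` is a shortest path between its endpoints. -/
def SimpleGraph.IsShortestPath (G : SimpleGraph V) {x y : V} (p : G.Walk x y) : Prop :=
  p.IsPath ∧ p.length = G.dist x y

/-- `S` is an `x`-visibility set: `x ∉ S` and for every `y ∈ S` there is a shortest
`x,y`-path meeting `S` only in `y`. -/
def SimpleGraph.IsXVisSet (G : SimpleGraph V) (x : V) (S : Finset V) : Prop :=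
  x ∉ S ∧ ∀ y ∈ S, ∃ p : G.Walk x y, G.IsShortestPath p ∧
    ∀ z ∈ p.support, z ∈ S → z = y

/-- The `x`-visibility number `v_x(G)`: the maximum cardinality of an `x`-visibility set. -/
noncomputable def SimpleGraph.vx (G : SimpleGraph V) (x : V) : ℕ :=
  sSup {n | ∃ S : Finset V, G.IsXVisSet x S ∧ S.card = n}

/-- The vertex visibility number `vv(G)`: the maximum of `v_x(G)` over all vertices. -/
noncomputable def SimpleGraph.vv (G : SimpleGraph V) [Fintype V] : ℕ :=
  Finset.univ.sup fun x => G.vx x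

/-- ℓ(G): the maximum number of leaves over all spanning trees of G. -/
noncomputable def SimpleGraph.maxSpanningTreeLeaves (G : SimpleGraph V) : ℕ :=
  sSup {k | ∃ T : SimpleGraph V, T ≤ G ∧ T.IsTree ∧
    {v : V | (T.neighborSet v).ncard = 1}.ncard = k}



open Finset

/-- The graph on `Fin N` where `i ~ j` iff `|i - j| ∈ {2,3}`. -/
def lineG (N : ℕ) : SimpleGraph (Fin N) :=
  SimpleGraph.fromRel (fun u v => (v : ℕ) = u + 2 ∨ (v : ℕ) = u + 3)

lemma lineG_adj {N : ℕ} (u v : Fin N) :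
    (lineG N).Adj u v ↔ ((v : ℕ) = u + 2 ∨ (v : ℕ) = u + 3 ∨ (u : ℕ) = v + 2 ∨ (u : ℕ) = v + 3) := by
  simp only [lineG, SimpleGraph.fromRel_adj]
  constructor
  · rintro ⟨-, h⟩; tauto
  · intro h
    have hne : u ≠ v := by
      rintro rfl; omega
    exact ⟨hne, by tauto⟩

/-- Any walk moves coordinates by at most 3 per step. -/
lemma walk_coord_le {N : ℕ} (c : Fin N → ℕ)
    (hc : ∀ u v : Fin N, (lineG N).Adj u v → c v ≤ c u + 3) :
    ∀ {a b : Fin N} (p : (lineG N).Walk a b), c b ≤ c a + 3 * p.length := by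
  intro a b p
  induction p with
  | nil => simp
  | cons h q ih =>
    rename_i u w _ 
    have := hc u w h
    simp only [SimpleGraph.Walk.length_cons]
    omega

/-- Monotone walk construction: if `↑a + Δ = ↑b`, `2 ≤ Δ`, there is a walk of length ≤ (Δ+2)/3. -/
lemma exists_walk_up {N : ℕ} : ∀ (Δ : ℕ) (a b : Fin N), (a : ℕ) + Δ = b → 2 ≤ Δ →
    ∃ p : (lineG N).Walk a b, 3 * p.length ≤ Δ + 2 := by
  intro Δ
  induction Δ using Nat.strong_induction_on with
  | _ Δ ih =>
    intro a b hab h2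
    by_cases h5 : Δ ≤ 4
    · interval_cases Δ
      · -- Δ = 2
        have h1 : (lineG N).Adj a b := by rw [lineG_adj]; omega
        exact ⟨SimpleGraph.Walk.cons h1 SimpleGraph.Walk.nil, by simp⟩
      · -- Δ = 3
        have h1 : (lineG N).Adj a b := by rw [lineG_adj]; omega
        exact ⟨SimpleGraph.Walk.cons h1 SimpleGraph.Walk.nil, by simp⟩
      · -- Δ = 4
        have hm : (a : ℕ) + 2 < N := by have := b.isLt; omega
        have h1 : (lineG N).Adj a ⟨(a : ℕ) + 2, hm⟩ := by rw [lineG_adj]; simp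
        have h2' : (lineG N).Adj ⟨(a : ℕ) + 2, hm⟩ b := by rw [lineG_adj]; simp; omega
        exact ⟨SimpleGraph.Walk.cons h1 (SimpleGraph.Walk.cons h2' SimpleGraph.Walk.nil), by simp⟩
    · -- Δ ≥ 5 : step +3 then recurse
      have hm : (a : ℕ) + 3 < N := by have := b.isLt; omega
      obtain ⟨q, hq⟩ := ih (Δ - 3) (by omega) ⟨(a : ℕ) + 3, hm⟩ b (by simp; omega) (by omega)
      have h1 : (lineG N).Adj a ⟨(a : ℕ) + 3, hm⟩ := by rw [lineG_adj]; simp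
      exact ⟨SimpleGraph.Walk.cons h1 q, by simp only [SimpleGraph.Walk.length_cons]; omega⟩

/-- dist upper bound. -/
lemma dist_ub {N : ℕ} (a b : Fin N) (Δ : ℕ) (hab : (a : ℕ) + Δ = b) (h2 : 2 ≤ Δ) :
    3 * (lineG N).dist a b ≤ Δ + 2 := by
  obtain ⟨p, hp⟩ := exists_walk_up Δ a b hab h2
  have := SimpleGraph.dist_le p
  omega


/-- Reachable-and-open offsets at level `k` (w.r.t. avoided set `T`). -/
def RRT (T : Finset ℕ) : ℕ → Finset ℕ
  | 0 => {0}
  | (k+1) => (((RRT T k).biUnion fun q => {q + 2, q + 3}) ∩ {3*k+1, 3*k+2, 3*k+3}) \ T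

/-- Per-level counting: new T-elements plus new frontier is at most old frontier + 1. -/
lemma level_count (T : Finset ℕ) (k : ℕ)
    (hreach : ∀ j ∈ T ∩ {3*k+1, 3*k+2, 3*k+3},
      j ∈ (RRT T k).biUnion fun q => {q + 2, q + 3}) :
    (T ∩ {3*k+1, 3*k+2, 3*k+3}).card + (RRT T (k+1)).card ≤ (RRT T k).card + 1 := by
  classical
  set D : Finset ℕ := {3*k+1, 3*k+2, 3*k+3} with hD
  set reach : Finset ℕ := (RRT T k).biUnion fun q => {q + 2, q + 3} with hre
  have hsub1 : T ∩ D ⊆ reach ∩ D := by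
    intro j hj
    rw [mem_inter]
    exact ⟨hreach j hj, (mem_inter.mp hj).2⟩
  have hsub2 : RRT T (k+1) ⊆ reach ∩ D := by
    intro j hj
    simp only [RRT, mem_sdiff] at hj
    exact hj.1
  have hdisj : Disjoint (T ∩ D) (RRT T (k+1)) := by
    rw [Finset.disjoint_left]
    intro j hj hj2
    simp only [RRT, mem_sdiff] at hj2
    exact hj2.2 (mem_inter.mp hj).1
  have hcards : (T ∩ D).card + (RRT T (k+1)).card ≤ (reach ∩ D).card := by
    rw [← card_union_of_disjoint hdisj]
    exact card_le_card (union_subset hsub1 hsub2)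
  have hRD : (reach ∩ D).card ≤ (RRT T k).card + 1 := by
    rcases Nat.lt_or_ge (RRT T k).card 2 with h2 | h2
    · rcases Nat.lt_or_ge (RRT T k).card 1 with h1 | h1
      · -- card 0
        have he : RRT T k = ∅ := card_eq_zero.mp (by omega)
        have he2 : reach = ∅ := by rw [hre, he]; simp
        simp [he2]
      · -- card 1
        have hc1 : (RRT T k).card = 1 := by omega
        obtain ⟨q, hq⟩ := card_eq_one.mp hc1
        have hr2 : reach = {q + 2, q + 3} := by rw [hre, hq]; simp
        calc (reach ∩ D).card ≤ reach.card := card_le_card (inter_subset_left)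
          _ ≤ 2 := by rw [hr2]; exact card_le_two ..
          _ ≤ _ := by omega
    · calc (reach ∩ D).card ≤ D.card := card_le_card (inter_subset_right)
        _ ≤ 3 := by rw [hD]; exact card_le_three ..
        _ ≤ _ := by omega
  omega

/-- Telescoping sum over levels. -/
lemma levels_sum (T : Finset ℕ) (L : ℕ)
    (hreach : ∀ k, ∀ j ∈ T ∩ {3*k+1, 3*k+2, 3*k+3},
      j ∈ (RRT T k).biUnion fun q => {q + 2, q + 3}) :
    (∑ k ∈ Finset.range L, (T ∩ {3*k+1, 3*k+2, 3*k+3}).card) + (RRT T L).card ≤ L + 1 := by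
  induction L with
  | zero => simp [RRT]
  | succ L ih =>
    rw [Finset.sum_range_succ]
    have := level_count T L (hreach L)
    omega

/-- The one-sided bound: `|T| ≤ L + 1`. -/
lemma side_bound (T : Finset ℕ) (L : ℕ)
    (hT2 : ∀ j ∈ T, 2 ≤ j)
    (hK : ∀ j ∈ T, (j + 2) / 3 ≤ L)
    (hreach : ∀ k, ∀ j ∈ T ∩ {3*k+1, 3*k+2, 3*k+3},
      j ∈ (RRT T k).biUnion fun q => {q + 2, q + 3}) :
    T.card ≤ L + 1 := by
  classical
  have hcover : ∀ j ∈ T, (j + 2) / 3 - 1 ∈ Finset.range L := by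
    intro j hj
    have := hT2 j hj; have := hK j hj
    rw [Finset.mem_range]; omega
  have hcard := Finset.card_eq_sum_card_fiberwise hcover
  have hfib : ∀ k ∈ Finset.range L,
      (T.filter fun j => (j + 2) / 3 - 1 = k).card ≤ (T ∩ {3*k+1, 3*k+2, 3*k+3}).card := by
    intro k _
    apply card_le_card
    intro j hj
    rw [Finset.mem_filter] at hj
    have h2 := hT2 j hj.1
    rw [mem_inter]
    refine ⟨hj.1, ?_⟩
    have := hj.2
    simp only [mem_insert, mem_singleton]
    omega
  have hsum : T.card ≤ ∑ k ∈ Finset.range L, (T ∩ {3*k+1, 3*k+2, 3*k+3}).card := by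
    rw [hcard]
    exact Finset.sum_le_sum hfib
  have := levels_sum T L hreach
  omega

lemma walkW {N : ℕ} (c : Fin N → ℕ) (hcinj : Function.Injective c)
    (hcstep : ∀ u v : Fin N, (lineG N).Adj u v →
      (c v = c u + 2 ∨ c v = c u + 3 ∨ c u = c v + 2 ∨ c u = c v + 3))
    (x : Fin N) (S : Finset (Fin N)) (T : Finset ℕ)
    (hTS : ∀ j ∈ T, ∃ y ∈ S, c y = c x + j)
    (y : Fin N) (oy : ℕ) (hoy : c y = c x + oy) (hoy2 : 2 ≤ oy)
    (t : ℕ) (h3t : 3 * t ≤ oy + 2) :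
    ∀ (len : ℕ) (v : Fin N) (p : (lineG N).Walk v y) (i oi : ℕ),
      p.length = len → i + p.length = t → 1 ≤ p.length →
      c v = c x + oi → oi ≤ 3 * i → oi ∈ RRT T i →
      (∀ z ∈ p.support, z ∈ S → z = y) →
      oy ∈ (RRT T (t - 1)).biUnion fun q => {q + 2, q + 3} := by
  have hc3 : ∀ u v : Fin N, (lineG N).Adj u v → c v ≤ c u + 3 := by
    intro u v h
    rcases hcstep u v h with h' | h' | h' | h' <;> omega
  intro len
  induction len using Nat.strong_induction_on with
  | _ len ih =>
    intro v p i oi hplen hit hlen hcv hoile hR hS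
    cases p with
    | nil => simp at hlen
    | @cons v w yy h q =>
      simp only [SimpleGraph.Walk.length_cons] at hit hplen
      have hqb := walk_coord_le c hc3 q
      have hstep := hcstep v w h
      cases q with
      | nil =>
        -- w = y, single final step
        have hfin : oy = oi + 2 ∨ oy = oi + 3 := by
          simp only [SimpleGraph.Walk.length_nil] at hit
          rcases hstep with hs | hs | hs | hs <;> omega
        have htt : t - 1 = i := by
          simp only [SimpleGraph.Walk.length_nil] at hit; omega
        rw [htt, Finset.mem_biUnion]
        refine ⟨oi, hR, ?_⟩
        simp only [Finset.mem_insert, Finset.mem_singleton]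
        omega
      | @cons w w2 yy2 h' q' =>
        -- interior vertex w
        simp only [SimpleGraph.Walk.length_cons] at hqb hit hplen
        -- positive step
        have hpos : c w = c v + 2 ∨ c w = c v + 3 := by
          rcases hstep with hs | hs | hs | hs
          · left; exact hs
          · right; exact hs
          all_goals (exfalso; omega)
        have hwy : w ≠ y := by
          intro hwyeq
          rw [hwyeq, hoy] at hpos
          rcases hpos with hs | hs <;> omega
        have hwS : w ∉ S := by
          intro hw
          exact hwy (hS w (by simp [SimpleGraph.Walk.support_cons]) hw)
        set ow := oi + (c w - c v) with how
        have hcw : c w = c x + ow := by rcases hpos with hs | hs <;> omega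
        have hoT : ow ∉ T := by
          intro hmem
          obtain ⟨y2, hy2S, hy2c⟩ := hTS _ hmem
          have hcc : c y2 = c w := by omega
          exact hwS (hcinj hcc ▸ hy2S)
        have hwD : ow ∈ RRT T (i+1) := by
          simp only [RRT, Finset.mem_sdiff, Finset.mem_inter]
          refine ⟨⟨?_, ?_⟩, hoT⟩
          · rw [Finset.mem_biUnion]
            refine ⟨oi, hR, ?_⟩
            simp only [Finset.mem_insert, Finset.mem_singleton]
            rcases hpos with hs | hs <;> omega
          · simp only [Finset.mem_insert, Finset.mem_singleton]
            rcases hpos with hs | hs <;> omega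
        refine ih (SimpleGraph.Walk.cons h' q').length
          (by simp only [SimpleGraph.Walk.length_cons]; omega) w
          (SimpleGraph.Walk.cons h' q') (i+1) ow rfl ?_ ?_ hcw
          (by rcases hpos with hs | hs <;> omega) hwD ?_
        · simp only [SimpleGraph.Walk.length_cons]; omega
        · simp only [SimpleGraph.Walk.length_cons]; omega
        · intro z hz hzS
          refine hS z ?_ hzS
          simp only [SimpleGraph.Walk.support_cons] at hz ⊢
          simp only [List.mem_cons] at hz ⊢
          tauto

/-- One side of the visibility set is small. -/
lemma side_card {N : ℕ} (c : Fin N → ℕ) (hcinj : Function.Injective c)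
    (hcstep : ∀ u v : Fin N, (lineG N).Adj u v →
      (c v = c u + 2 ∨ c v = c u + 3 ∨ c u = c v + 2 ∨ c u = c v + 3))
    (x : Fin N) (S : Finset (Fin N))
    (hvis : (lineG N).IsXVisSet x S)
    (K : ℕ) (hK : ∀ y : Fin N, c y ≤ c x + K)
    (hdist : ∀ y : Fin N, c x + 2 ≤ c y → 3 * (lineG N).dist x y ≤ (c y - c x) + 2) :
    (S.filter fun y => c x + 2 ≤ c y).card ≤ (K + 2) / 3 + 1 := by
  classical
  have hc3 : ∀ u v : Fin N, (lineG N).Adj u v → c v ≤ c u + 3 := by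
    intro u v h
    rcases hcstep u v h with h' | h' | h' | h' <;> omega
  set F := S.filter fun y => c x + 2 ≤ c y with hF
  set T : Finset ℕ := F.image (fun y => c y - c x) with hT
  have hFT : F.card = T.card := by
    rw [hT]
    refine (Finset.card_image_of_injOn ?_).symm
    intro a ha b hb hab
    simp only [hF, Finset.coe_filter, Set.mem_setOf_eq] at ha hb
    simp only at hab
    have := ha.2; have := hb.2
    exact hcinj (by omega)
  have hTS : ∀ j ∈ T, ∃ y ∈ S, c y = c x + j := by
    intro j hj
    rw [hT, Finset.mem_image] at hj
    obtain ⟨y, hy, hyj⟩ := hj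
    rw [hF, Finset.mem_filter] at hy
    exact ⟨y, hy.1, by omega⟩
  have hT2 : ∀ j ∈ T, 2 ≤ j := by
    intro j hj
    rw [hT, Finset.mem_image] at hj
    obtain ⟨y, hy, hyj⟩ := hj
    rw [hF, Finset.mem_filter] at hy
    omega
  rw [hFT]
  refine side_bound T ((K+2)/3) hT2 ?_ ?_
  · -- level bound
    intro j hj
    obtain ⟨y, hyS, hyc⟩ := hTS j hj
    have := hK y
    omega
  · -- reach
    intro k j hj
    rw [Finset.mem_inter] at hj
    obtain ⟨hjT, hjD⟩ := hj
    obtain ⟨y, hyS, hyc⟩ := hTS j hjT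
    have h2j := hT2 j hjT
    obtain ⟨p, ⟨hpath, hplen⟩, hpS⟩ := hvis.2 y hyS
    have hdy := hdist y (by omega)
    have h3t : 3 * p.length ≤ j + 2 := by rw [hplen]; omega
    have hyb := walk_coord_le c hc3 p
    have hlen1 : 1 ≤ p.length := by omega
    have hres := walkW c hcinj hcstep x S T hTS y j hyc (by omega) p.length h3t
      p.length x p 0 0 rfl (by omega) hlen1 (by omega) (by omega) (by simp [RRT]) hpS
    have hjD' : 3*k+1 ≤ j ∧ j ≤ 3*k+3 := by
      simp only [Finset.mem_insert, Finset.mem_singleton] at hjD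
      omega
    have htk : p.length - 1 = k := by omega
    rwa [htk] at hres

/-- Parent function for the caterpillar spanning tree. -/
def parN (j : ℕ) : ℕ :=
  if j % 3 = 1 then j + 2 else if j % 3 = 2 then j - 2 else j - 3

/-- Height measure certifying the parent relation is acyclic. -/
def muN (j : ℕ) : ℕ :=
  j / 3 + (if j % 3 = 1 then 2 else if j % 3 = 2 then 1 else 0)

lemma parN_lt {M : ℕ} (j : ℕ) (hj : j < 3*M+1) (h0 : j ≠ 0) : parN j < 3*M+1 := by
  unfold parN; split_ifs <;> omega

lemma muN_lt (j : ℕ) (h0 : j ≠ 0) : muN (parN j) < muN j := by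
  unfold parN muN; split_ifs <;> omega

lemma parN_mod (j : ℕ) : parN j % 3 = 0 ∨ (j % 3 = 0 ∧ j < 3 ∧ parN j = 0) := by
  unfold parN; split_ifs <;> omega

section Tree
variable (M : ℕ)

def parF (v : Fin (3*M+1)) : Fin (3*M+1) :=
  if h : (v : ℕ) = 0 then v else ⟨parN v, parN_lt v v.isLt h⟩

def treeE : Finset (Sym2 (Fin (3*M+1))) :=
  (Finset.univ.filter fun v : Fin (3*M+1) => (v : ℕ) ≠ 0).image fun v => s(v, parF M v)

def treeT : SimpleGraph (Fin (3*M+1)) := SimpleGraph.fromEdgeSet ↑(treeE M)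

lemma parF_val (v : Fin (3*M+1)) (h : (v : ℕ) ≠ 0) : ((parF M v : Fin (3*M+1)) : ℕ) = parN v := by
  unfold parF
  rw [dif_neg h]

lemma parF_ne (v : Fin (3*M+1)) (h : (v : ℕ) ≠ 0) : parF M v ≠ v := by
  intro heq
  have h1 := parF_val M v h
  have h2 := muN_lt (v : ℕ) h
  rw [heq] at h1
  rw [← h1] at h2
  omega

lemma treeT_adj (u v : Fin (3*M+1)) :
    (treeT M).Adj u v ↔ (((u:ℕ) ≠ 0 ∧ v = parF M u) ∨ ((v:ℕ) ≠ 0 ∧ u = parF M v)) := by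
  unfold treeT
  rw [SimpleGraph.fromEdgeSet_adj]
  constructor
  · rintro ⟨hmem, hne⟩
    rw [Finset.mem_coe] at hmem
    unfold treeE at hmem
    rw [Finset.mem_image] at hmem
    obtain ⟨w, hw, hweq⟩ := hmem
    rw [Finset.mem_filter] at hw
    rw [Sym2.eq_iff] at hweq
    rcases hweq with ⟨rfl, rfl⟩ | ⟨h1, h2⟩
    · exact Or.inl ⟨hw.2, rfl⟩
    · subst h1; subst h2
      exact Or.inr ⟨hw.2, rfl⟩
  · intro hor
    have hmu : ∀ w : Fin (3*M+1), (w:ℕ) ≠ 0 → s(w, parF M w) ∈ treeE M := by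
      intro w hw
      unfold treeE
      rw [Finset.mem_image]
      exact ⟨w, by rw [Finset.mem_filter]; exact ⟨Finset.mem_univ _, hw⟩, rfl⟩
    rcases hor with ⟨h0, rfl⟩ | ⟨h0, rfl⟩
    · exact ⟨by rw [Finset.mem_coe]; exact hmu u h0, fun hh => (parF_ne M u h0) hh.symm⟩
    · exact ⟨by rw [Finset.mem_coe, Sym2.eq_swap]; exact hmu v h0, fun hh => (parF_ne M v h0) hh⟩

/-- The tree is a subgraph of `lineG`. -/
lemma treeT_le : treeT M ≤ lineG (3*M+1) := by
  intro u v huv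
  rw [treeT_adj] at huv
  rw [lineG_adj]
  rcases huv with ⟨h0, rfl⟩ | ⟨h0, rfl⟩
  · have := parF_val M u h0
    unfold parN at this
    split_ifs at this <;> omega
  · have := parF_val M v h0
    unfold parN at this
    split_ifs at this <;> omega

/-- Every vertex reaches 0 in the tree. -/
lemma treeT_reach (v : Fin (3*M+1)) : (treeT M).Reachable v ⟨0, by omega⟩ := by
  generalize hm : muN (v : ℕ) = m
  induction m using Nat.strong_induction_on generalizing v with
  | _ m ih =>
    by_cases h0 : (v : ℕ) = 0
    · have : v = ⟨0, by omega⟩ := by ext; exact h0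
      rw [this]
    · have hadj : (treeT M).Adj v (parF M v) := by
        rw [treeT_adj]; exact Or.inl ⟨h0, rfl⟩
      have hlt : muN ((parF M v : Fin (3*M+1)) : ℕ) < m := by
        rw [parF_val M v h0, ← hm]
        exact muN_lt _ h0
      exact (hadj.reachable).trans (ih _ hlt (parF M v) rfl)

lemma treeT_connected : (treeT M).Connected := by
  rw [SimpleGraph.connected_iff]
  refine ⟨fun u v => (treeT_reach M u).trans (treeT_reach M v).symm, ⟨⟨0, by omega⟩⟩⟩

/-- Acyclicity via the maximal-μ-vertex argument. -/
lemma treeT_acyclic : (treeT M).IsAcyclic := by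
  intro v c hc
  classical
  have hvmem : v ∈ c.support.toFinset := List.mem_toFinset.mpr c.start_mem_support
  obtain ⟨m, hmF, hmax⟩ := Finset.exists_max_image c.support.toFinset (fun z => muN (z : ℕ))
    ⟨v, hvmem⟩
  have hmc : m ∈ c.support := List.mem_toFinset.mp hmF
  set c' := c.rotate m hmc with hc'def
  have hc' : c'.IsCycle := hc.rotate hmc
  have hsupp : ∀ z, z ∈ c'.support → z ∈ c.support := by
    intro z hz
    have hrot := SimpleGraph.Walk.support_rotate c m hmc
    rcases (SimpleGraph.Walk.mem_support_iff _).mp hz with rfl | htail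
    · exact hmc
    · have := hrot.mem_iff.mp htail
      exact List.mem_of_mem_tail this
  -- decompose c' = cons h q
  rcases hq : c' with _ | ⟨h, q⟩
  · exact hc'.ne_nil hq
  case _ w =>
  -- h : Adj m w, q : Walk w m
  have hLen : 3 ≤ c'.length := hc'.three_le_length
  have hqlen : 2 ≤ q.length := by
    rw [hq] at hLen
    simp only [SimpleGraph.Walk.length_cons] at hLen
    omega
  have hmax' : ∀ z : Fin (3*M+1), z ∈ c'.support → muN (z:ℕ) ≤ muN (m:ℕ) := by
    intro z hz
    exact hmax z (List.mem_toFinset.mpr (hsupp z hz))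
  have hm0 : (m : ℕ) ≠ 0 ∧ w = parF M m := by
    rcases (treeT_adj M m w).mp h with ⟨h0, rfl⟩ | ⟨h0, hpar⟩
    · exact ⟨h0, rfl⟩
    · exfalso
      have hwsup : w ∈ c'.support := by
        rw [hq]
        simp only [SimpleGraph.Walk.support_cons, List.mem_cons]
        exact Or.inr (SimpleGraph.Walk.start_mem_support q)
      have h1 := hmax' w hwsup
      have h2 := muN_lt (w : ℕ) h0
      rw [← parF_val M w h0, ← hpar] at h2
      omega
  obtain ⟨hm0', hwpar⟩ := hm0
  -- last edge
  obtain ⟨xx, q2, h', hcat⟩ := SimpleGraph.Walk.exists_cons_eq_concat h q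
  have hxx : xx = parF M m := by
    rcases (treeT_adj M xx m).mp h' with ⟨h0, hpar⟩ | ⟨h0, rfl⟩
    · exfalso
      have hxxsup : xx ∈ c'.support := by
        rw [hq, hcat, SimpleGraph.Walk.support_concat]
        simp only [List.concat_eq_append, List.mem_append]
        exact Or.inl (SimpleGraph.Walk.end_mem_support q2)
      have h1 := hmax' xx hxxsup
      have h2 := muN_lt (xx : ℕ) h0
      rw [← parF_val M xx h0, ← hpar] at h2
      omega
    · rfl
  -- the first and last edges coincide, contradicting Nodup of edges
  have hnodup : c'.edges.Nodup := hc'.isCircuit.isTrail.edges_nodup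
  have hedges1 : c'.edges = s(m, w) :: q.edges := by
    rw [hq, SimpleGraph.Walk.edges_cons]
  have hedges2 : c'.edges = q2.edges ++ [s(xx, m)] := by
    rw [hq, hcat, SimpleGraph.Walk.edges_concat, List.concat_eq_append]
  have hkey : s(m, w) :: q.edges = q2.edges ++ [s(xx, m)] := by
    rw [← hedges1, hedges2]
  have hxw : s(xx, m) = s(m, w) := by
    rw [hxx, hwpar, Sym2.eq_swap]
  have hmem : s(m, w) ∈ q.edges := by
    rcases q2e : q2.edges with _ | ⟨e2, l2⟩
    · rw [q2e] at hkey
      simp only [List.nil_append] at hkey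
      have : q.edges = [] := by
        have := congrArg List.length hkey
        simp at this
        simpa using this
      have hql : q.edges.length = q.length := SimpleGraph.Walk.length_edges q
      rw [this] at hql
      simp at hql
      omega
    · rw [q2e] at hkey
      simp only [List.cons_append, List.cons.injEq] at hkey
      rw [hkey.2, ← hxw]
      simp
  rw [hedges1] at hnodup
  rw [List.nodup_cons] at hnodup
  exact hnodup.1 hmem


/-- Vertices not divisible by 3 are leaves of the tree. -/
lemma treeT_leaf (v : Fin (3*M+1)) (hv : (v : ℕ) % 3 ≠ 0) :
    (treeT M).neighborSet v = {parF M v} := by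
  have hv0 : (v : ℕ) ≠ 0 := by omega
  ext u
  simp only [SimpleGraph.mem_neighborSet, Set.mem_singleton_iff]
  rw [treeT_adj]
  constructor
  · rintro (⟨h0, rfl⟩ | ⟨h0, hpar⟩)
    · rfl
    · exfalso
      have h1 : (v : ℕ) = parN (u : ℕ) := by rw [hpar]; exact parF_val M u h0
      unfold parN at h1
      split_ifs at h1 <;> omega
  · intro h
    exact Or.inl ⟨hv0, h⟩

/-- Counting: #{j < 3M+1 | j % 3 ≠ 0} = 2M. -/
lemma count_nonmult (M' : ℕ) : ((Finset.range (3*M'+1)).filter fun j => j % 3 ≠ 0).card = 2*M' := by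
  induction M' with
  | zero => rfl
  | succ K ih =>
    have h1 : 3*(K+1)+1 = (3*K+1) + 1 + 1 + 1 := by ring
    rw [h1, Finset.range_add_one, Finset.range_add_one, Finset.range_add_one]
    rw [Finset.filter_insert, Finset.filter_insert, Finset.filter_insert]
    rw [if_pos (by omega : (3*K+1+1) % 3 ≠ 0), if_pos (by omega : (3*K+1) % 3 ≠ 0),
      if_neg (by omega : ¬ ((3*K+1+1+1) % 3 ≠ 0))]
    rw [Finset.card_insert_of_notMem (by simp), Finset.card_insert_of_notMem (by simp)]
    omega

lemma card_leaves : 2*M ≤ {v : Fin (3*M+1) | ((treeT M).neighborSet v).ncard = 1}.ncard := by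
  classical
  have hsub : {v : Fin (3*M+1) | (v : ℕ) % 3 ≠ 0} ⊆
      {v : Fin (3*M+1) | ((treeT M).neighborSet v).ncard = 1} := by
    intro v hv
    simp only [Set.mem_setOf_eq] at hv ⊢
    rw [treeT_leaf M v hv]
    exact Set.ncard_singleton _
  have h1 : {v : Fin (3*M+1) | (v : ℕ) % 3 ≠ 0}.ncard = 2*M := by
    have heq : {v : Fin (3*M+1) | (v : ℕ) % 3 ≠ 0} =
        ↑(Finset.univ.filter fun v : Fin (3*M+1) => (v : ℕ) % 3 ≠ 0) := by
      ext v; simp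
    rw [heq, Set.ncard_coe_finset]
    rw [← count_nonmult M]
    refine Finset.card_bij (i := fun v _ => (v : ℕ)) ?_ ?_ ?_
    · intro v hv
      simp only [Finset.mem_filter, Finset.mem_range] at hv ⊢
      exact ⟨v.isLt, hv.2⟩
    · intro a ha b hb hab
      exact Fin.ext hab
    · intro j hj
      simp only [Finset.mem_filter, Finset.mem_range] at hj
      exact ⟨⟨j, hj.1⟩, by simp [hj.2], rfl⟩
  rw [← h1]
  exact Set.ncard_le_ncard hsub (Set.toFinite _)


end Tree

/-- Every x-visibility set in `lineG (3M+1)` has at most `M + 5` elements. -/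
lemma vis_bound (M : ℕ) (x : Fin (3*M+1)) (S : Finset (Fin (3*M+1)))
    (hvis : (lineG (3*M+1)).IsXVisSet x S) : S.card ≤ M + 5 := by
  classical
  -- right side
  have hA : (S.filter fun y : Fin (3*M+1) => (x:ℕ) + 2 ≤ (y:ℕ)).card ≤ ((3*M - (x:ℕ)) + 2) / 3 + 1 := by
    refine side_card (fun v => (v : ℕ)) (fun a b hab => Fin.ext hab) ?_ x S hvis _ ?_ ?_
    · intro u v h; rw [lineG_adj] at h
      show (v:ℕ) = (u:ℕ) + 2 ∨ (v:ℕ) = (u:ℕ) + 3 ∨ (u:ℕ) = (v:ℕ) + 2 ∨ (u:ℕ) = (v:ℕ) + 3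
      tauto
    · intro y
      show (y:ℕ) ≤ (x:ℕ) + (3*M - (x:ℕ))
      have := y.isLt; have := x.isLt; omega
    · intro y hy
      have hy' : (x:ℕ) + 2 ≤ (y:ℕ) := hy
      show 3 * (lineG (3*M+1)).dist x y ≤ ((y:ℕ) - (x:ℕ)) + 2
      have h3 := dist_ub x y ((y:ℕ) - (x:ℕ)) (by omega) (by omega)
      omega
  -- left side
  have hB : (S.filter fun y : Fin (3*M+1) => (3*M - (x:ℕ)) + 2 ≤ 3*M - (y:ℕ)).card ≤ ((x:ℕ) + 2) / 3 + 1 := by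
    refine side_card (fun v => 3*M - (v : ℕ)) ?_ ?_ x S hvis _ ?_ ?_
    · intro a b hab
      have hab' : 3*M - (a:ℕ) = 3*M - (b:ℕ) := hab
      have := a.isLt; have := b.isLt
      exact Fin.ext (by omega)
    · intro u v h; rw [lineG_adj] at h
      show 3*M - (v:ℕ) = 3*M - (u:ℕ) + 2 ∨ 3*M - (v:ℕ) = 3*M - (u:ℕ) + 3 ∨
        3*M - (u:ℕ) = 3*M - (v:ℕ) + 2 ∨ 3*M - (u:ℕ) = 3*M - (v:ℕ) + 3
      have := u.isLt; have := v.isLt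
      omega
    · intro y
      show 3*M - (y:ℕ) ≤ 3*M - (x:ℕ) + (x:ℕ)
      have := y.isLt; have := x.isLt; omega
    · intro y hy
      have hy' : 3*M - (x:ℕ) + 2 ≤ 3*M - (y:ℕ) := hy
      show 3 * (lineG (3*M+1)).dist x y ≤ ((3*M - (y:ℕ)) - (3*M - (x:ℕ))) + 2
      have hyx := y.isLt; have hxx := x.isLt
      have h3 := dist_ub y x ((x:ℕ) - (y:ℕ)) (by omega) (by omega)
      rw [SimpleGraph.dist_comm]
      omega
  -- split S
  have hsplit1 := Finset.card_filter_add_card_filter_not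
    (s := S) (p := fun y : Fin (3*M+1) => (x:ℕ) + 2 ≤ (y:ℕ))
  set S2 := S.filter (fun y : Fin (3*M+1) => ¬ ((x:ℕ) + 2 ≤ (y:ℕ))) with hS2
  have hsplit2 := Finset.card_filter_add_card_filter_not
    (s := S2) (p := fun y : Fin (3*M+1) => (y:ℕ) + 2 ≤ (x:ℕ))
  -- B side inclusion
  have hBsub : S2.filter (fun y : Fin (3*M+1) => (y:ℕ) + 2 ≤ (x:ℕ)) ⊆
      S.filter fun y : Fin (3*M+1) => (3*M - (x:ℕ)) + 2 ≤ 3*M - (y:ℕ) := by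
    intro y hy
    simp only [hS2, Finset.mem_filter] at hy ⊢
    have := y.isLt; have := x.isLt
    exact ⟨hy.1.1, by omega⟩
  -- near part
  have hC : (S2.filter (fun y : Fin (3*M+1) => ¬ ((y:ℕ) + 2 ≤ (x:ℕ)))).card ≤ 2 := by
    have h2 : (S2.filter (fun y : Fin (3*M+1) => ¬ ((y:ℕ) + 2 ≤ (x:ℕ)))).card ≤
        ({(x:ℕ) - 1, (x:ℕ) + 1} : Finset ℕ).card := by
      refine Finset.card_le_card_of_injOn (fun y : Fin (3*M+1) => (y : ℕ)) ?_ ?_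
      · intro y hy
        simp only [hS2, Finset.mem_coe, Finset.mem_filter] at hy
        have hyne : y ≠ x := by rintro rfl; exact hvis.1 hy.1.1
        have hvne : (y:ℕ) ≠ (x:ℕ) := fun hh => hyne (Fin.ext hh)
        simp only [Finset.mem_coe, Finset.mem_insert, Finset.mem_singleton]
        omega
      · intro a _ b _ hab
        exact Fin.ext hab
    calc _ ≤ _ := h2
      _ ≤ 2 := Finset.card_le_two ..
  have hb2 : (S2.filter (fun y : Fin (3*M+1) => (y:ℕ) + 2 ≤ (x:ℕ))).card ≤ ((x:ℕ) + 2) / 3 + 1 :=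
    le_trans (Finset.card_le_card hBsub) hB
  have hxlt := x.isLt
  omega

/-- For every positive integer n there is a finite connected graph G with
ℓ(G) − vv(G) ≥ n. -/
theorem stmt_2 (n : ℕ) (hn : 0 < n) :
    ∃ (m : ℕ) (G : SimpleGraph (Fin m)), G.Connected ∧
      G.vv + n ≤ G.maxSpanningTreeLeaves := by
  classical
  set M := n + 5 with hM
  refine ⟨3*M+1, lineG (3*M+1), ?_, ?_⟩
  · exact SimpleGraph.Connected.mono (treeT_le M) (treeT_connected M)
  · have hvv : (lineG (3*M+1)).vv ≤ M + 5 := by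
      unfold SimpleGraph.vv
      apply Finset.sup_le
      intro x _
      unfold SimpleGraph.vx
      apply csSup_le'
      rintro k ⟨S, hS, rfl⟩
      exact vis_bound M x S hS
    have hleaf : 2*M ≤ (lineG (3*M+1)).maxSpanningTreeLeaves := by
      unfold SimpleGraph.maxSpanningTreeLeaves
      have hBdd : BddAbove {k | ∃ T : SimpleGraph (Fin (3*M+1)), T ≤ lineG (3*M+1) ∧
          T.IsTree ∧ {v : Fin (3*M+1) | (T.neighborSet v).ncard = 1}.ncard = k} := by
        refine ⟨3*M+1, ?_⟩
        rintro k ⟨T, -, -, rfl⟩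
        calc {v : Fin (3*M+1) | (T.neighborSet v).ncard = 1}.ncard
            ≤ (Set.univ : Set (Fin (3*M+1))).ncard :=
              Set.ncard_le_ncard (Set.subset_univ _) Set.finite_univ
          _ = 3*M+1 := by rw [Set.ncard_univ]; simp
      have hmem : {v : Fin (3*M+1) | ((treeT M).neighborSet v).ncard = 1}.ncard ∈
          {k | ∃ T : SimpleGraph (Fin (3*M+1)), T ≤ lineG (3*M+1) ∧
            T.IsTree ∧ {v : Fin (3*M+1) | (T.neighborSet v).ncard = 1}.ncard = k} :=
        ⟨treeT M, treeT_le M, ⟨treeT_connected M, treeT_acyclic M⟩, rfl⟩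
      exact le_trans (card_leaves M) (le_csSup hBdd hmem)
    omega
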